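/- Conversely, if ‖w‖₂ ≤ θ‖u‖₂ with θ = (β-α)/(β+α) and v = ((α+β)/2)(u + w), then the sector constraint (v - αu)ᵀ(βu - v) ≥ 0 holds. -/

import Mathlib

theorem norm_bound_to_sector (m : ℕ) (α β : ℝ) (hα : 0 < α) (hαβ : α ≤ β)
    (u w : EuclideanSpace ℝ (Fin m))
    (hw : ‖w‖ ≤ ((β - α) / (β + α)) * ‖u‖) :
    inner ℝ (((α + β) / 2) • (u + w) - α • u)
      (β • u - ((α + β) / 2) • (u + w)) ≥ (0 : ℝ) := by
  set a : EuclideanSpace ℝ (Fin m) := ((β - α) / 2) • u with ha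
  set b : EuclideanSpace ℝ (Fin m) := ((α + β) / 2) • w with hb
  have h1 : ((α + β) / 2) • (u + w) - α • u = a + b := by
    rw [ha, hb]; module
  have h2 : β • u - ((α + β) / 2) • (u + w) = a - b := by
    rw [ha, hb]; module
  rw [h1, h2]
  have hinner : (inner ℝ (a + b) (a - b) : ℝ) = ‖a‖ ^ 2 - ‖b‖ ^ 2 := by
    rw [inner_sub_right, inner_add_left, inner_add_left,
      real_inner_self_eq_norm_sq, real_inner_self_eq_norm_sq,
      real_inner_comm b a]
    ring
  rw [hinner]
  have hab : 0 < α + β := by linarith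
  have hna : ‖a‖ = ((β - α) / 2) * ‖u‖ := by
    rw [ha, norm_smul, Real.norm_eq_abs, abs_of_nonneg (by linarith)]
  have hnb : ‖b‖ = ((α + β) / 2) * ‖w‖ := by
    rw [hb, norm_smul, Real.norm_eq_abs, abs_of_nonneg (by linarith)]
  have hble : ‖b‖ ≤ ‖a‖ := by
    rw [hna, hnb]
    have : ((α + β) / 2) * ‖w‖ ≤ ((α + β) / 2) * (((β - α) / (β + α)) * ‖u‖) :=
      mul_le_mul_of_nonneg_left hw (by linarith)
    calc ((α + β) / 2) * ‖w‖ ≤ ((α + β) / 2) * (((β - α) / (β + α)) * ‖u‖) := this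
      _ = ((β - α) / 2) * ‖u‖ := by
        have hne : β + α ≠ 0 := by linarith
        field_simp
        ring
  nlinarith [norm_nonneg b, norm_nonneg a]
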